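/- Let A ∈ ℝ^{n×n} be symmetric positive definite written in block form A = [[B, b],[bᵀ, a]] with B ∈ ℝ^{(n−1)×(n−1)}, b ∈ ℝ^{n−1}, a ∈ ℝ. Then B is invertible, and ‖B⁻¹b‖_∞ ≤ ‖A⁻¹‖_{∞,1} · (λ_max(A) + λ_max(A)²/λ_min(A)). -/

import Mathlib

open Finset Matrix

/-- Let `A = [[B, b],[bᵀ, a]]` be symmetric positive definite with
quadratic-form bounds `lmin‖x‖² ≤ xᵀAx ≤ lmax‖x‖²` and maximum absolute row
sum of `A⁻¹` at most `cinf`.  Then `B` is invertible and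
`‖B⁻¹b‖_∞ ≤ cinf (lmax + lmax²/lmin)`. -/
theorem stmt_10 {m : ℕ} (B : Matrix (Fin m) (Fin m) ℝ) (b : Fin m → ℝ)
    (a : ℝ) (A : Matrix (Fin m ⊕ Unit) (Fin m ⊕ Unit) ℝ)
    (hA : A = Matrix.fromBlocks B (Matrix.of fun i (_ : Unit) => b i)
      (Matrix.of fun (_ : Unit) j => b j) (Matrix.of fun _ _ => a))
    (hPD : A.PosDef) (lmin lmax cinf : ℝ) (hlmin : 0 < lmin)
    (hmin : ∀ x : Fin m ⊕ Unit → ℝ, lmin * (x ⬝ᵥ x) ≤ x ⬝ᵥ (A *ᵥ x))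
    (hmax : ∀ x : Fin m ⊕ Unit → ℝ, x ⬝ᵥ (A *ᵥ x) ≤ lmax * (x ⬝ᵥ x))
    (hinf : ∀ i, ∑ j, |A⁻¹ i j| ≤ cinf) :
    IsUnit B.det ∧
    ∀ i, |(B⁻¹ *ᵥ b) i| ≤ cinf * (lmax + lmax ^ 2 / lmin) := by
  have hdetA : IsUnit A.det := isUnit_iff_ne_zero.mpr (ne_of_gt hPD.det_pos)
  -- quadratic form computation on vectors (x, t)
  have hAv : ∀ (x : Fin m → ℝ) (t : ℝ),
      A *ᵥ (Sum.elim x fun _ => t) =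
        Sum.elim (B *ᵥ x + t • b) (fun _ => b ⬝ᵥ x + a * t) := by
    intro x t
    subst hA
    rw [Matrix.fromBlocks_mulVec]
    funext j
    cases j with
    | inl i => simp [Matrix.mulVec, dotProduct, mul_comm]
    | inr i => simp [Matrix.mulVec, dotProduct]
  have quad : ∀ (x : Fin m → ℝ) (t : ℝ),
      (Sum.elim x fun _ => t) ⬝ᵥ (A *ᵥ (Sum.elim x fun _ => t)) =
        x ⬝ᵥ (B *ᵥ x) + 2 * t * (b ⬝ᵥ x) + t ^ 2 * a := by
    intro x t
    rw [hAv]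
    show (x ⊕ᵥ fun _ : Unit => t) ⬝ᵥ ((B *ᵥ x + t • b) ⊕ᵥ fun _ : Unit => b ⬝ᵥ x + a * t) = _
    rw [sumElim_dotProduct_sumElim, dotProduct_add, dotProduct_smul,
      dotProduct_comm x b]
    simp [dotProduct]
    ring
  have hnorm : ∀ (x : Fin m → ℝ) (t : ℝ),
      (Sum.elim x fun _ : Unit => t) ⬝ᵥ (Sum.elim x fun _ : Unit => t) = x ⬝ᵥ x + t ^ 2 := by
    intro x t
    show (x ⊕ᵥ fun _ : Unit => t) ⬝ᵥ (x ⊕ᵥ fun _ : Unit => t) = _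
    rw [sumElim_dotProduct_sumElim]
    simp [dotProduct, sq]
  -- basic bounds
  have ha_lb : lmin ≤ a := by
    have h1 := hmin (Sum.elim 0 fun _ => 1)
    rw [hnorm, quad] at h1
    simpa using h1
  have ha_ub : a ≤ lmax := by
    have h1 := hmax (Sum.elim 0 fun _ => 1)
    rw [hnorm, quad] at h1
    simpa using h1
  have hlmax : 0 < lmax := lt_of_lt_of_le hlmin (le_trans ha_lb ha_ub)
  have hBlow : ∀ x : Fin m → ℝ, lmin * (x ⬝ᵥ x) ≤ x ⬝ᵥ (B *ᵥ x) := by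
    intro x
    have h1 := hmin (Sum.elim x fun _ => 0)
    rw [hnorm, quad] at h1
    simpa using h1
  have hxx : ∀ x : Fin m → ℝ, (0:ℝ) ≤ x ⬝ᵥ x := fun x =>
    Finset.sum_nonneg fun i _ => mul_self_nonneg _
  -- b ⬝ᵥ b ≤ lmax ^ 2
  have hbb : b ⬝ᵥ b ≤ lmax ^ 2 := by
    have h1 := hmax (Sum.elim b fun _ => lmax)
    rw [hnorm, quad] at h1
    have h2 := hBlow b
    have h3 := hxx b
    nlinarith
  -- B is positive definite
  have hBPD : B.PosDef := by
    refine Matrix.PosDef.of_dotProduct_mulVec_pos ?_ ?_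
    · ext i j
      have h := congrFun (congrFun hPD.1 (Sum.inl i)) (Sum.inl j)
      simp [hA, Matrix.conjTranspose_apply] at h ⊢
      exact h
    · intro x hx
      have hx' : Sum.elim x (fun _ : Unit => (0:ℝ)) ≠ 0 := by
        intro h
        apply hx
        funext i
        exact congrFun h (Sum.inl i)
      have h := hPD.dotProduct_mulVec_pos hx'
      rw [star_trivial] at h
      rw [quad] at h
      simpa using h
  have hBdet : IsUnit B.det := isUnit_iff_ne_zero.mpr (ne_of_gt hBPD.det_pos)
  refine ⟨hBdet, ?_⟩
  set u : Fin m → ℝ := B⁻¹ *ᵥ b with hu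
  have hBu : B *ᵥ u = b := by
    rw [hu, Matrix.mulVec_mulVec, Matrix.mul_nonsing_inv _ hBdet, Matrix.one_mulVec]
  set y : Fin m ⊕ Unit → ℝ := Sum.elim u fun _ => 0 with hy
  have hAy : A *ᵥ y = Sum.elim b fun _ => b ⬝ᵥ u := by
    rw [hy, hAv, hBu]
    simp
  -- bound on S = b ⬝ᵥ u
  have hS_lb : lmin * (u ⬝ᵥ u) ≤ b ⬝ᵥ u := by
    have h := hBlow u
    rw [hBu] at h
    rwa [dotProduct_comm b u]
  have hS0 : (0:ℝ) ≤ b ⬝ᵥ u :=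
    le_trans (mul_nonneg hlmin.le (hxx u)) hS_lb
  have hCS : (b ⬝ᵥ u) ^ 2 ≤ (b ⬝ᵥ b) * (u ⬝ᵥ u) := by
    have := Finset.sum_mul_sq_le_sq_mul_sq Finset.univ b u
    simpa [dotProduct, sq] using this
  have hS_ub : b ⬝ᵥ u ≤ lmax ^ 2 / lmin := by
    rw [le_div_iff₀ hlmin]
    nlinarith [mul_le_mul_of_nonneg_left hCS hlmin.le,
      mul_le_mul_of_nonneg_left hS_lb (hxx b),
      mul_le_mul_of_nonneg_right hbb hS0, hS0, hlmax, sq_nonneg lmax, hxx u, hxx b]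
  -- componentwise bound on b
  have hbj : ∀ j, |b j| ≤ lmax := by
    intro j
    have h1 : b j ^ 2 ≤ b ⬝ᵥ b := by
      have := Finset.single_le_sum (f := fun k => b k * b k)
        (fun k _ => mul_self_nonneg (b k)) (Finset.mem_univ j)
      simpa [dotProduct, sq] using this
    nlinarith [abs_nonneg (b j), sq_abs (b j)]
  -- the final estimate
  intro i
  have hyrec : A⁻¹ *ᵥ (A *ᵥ y) = y := by
    rw [Matrix.mulVec_mulVec, Matrix.nonsing_inv_mul _ hdetA, Matrix.one_mulVec]
  have hui : u i = (A⁻¹ *ᵥ (A *ᵥ y)) (Sum.inl i) := (congrFun hyrec (Sum.inl i)).symm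
  have hC : (0:ℝ) ≤ lmax + lmax ^ 2 / lmin :=
    add_nonneg hlmax.le (div_nonneg (sq_nonneg _) hlmin.le)
  have hw : ∀ j, |(A *ᵥ y) j| ≤ lmax + lmax ^ 2 / lmin := by
    intro j
    rw [hAy]
    cases j with
    | inl j =>
      simp only [Sum.elim_inl]
      exact le_trans (hbj j) (le_add_of_nonneg_right (div_nonneg (sq_nonneg _) hlmin.le))
    | inr j =>
      simp only [Sum.elim_inr]
      rw [abs_of_nonneg hS0]
      exact le_trans hS_ub (le_add_of_nonneg_left hlmax.le)
  calc |(B⁻¹ *ᵥ b) i| = |∑ j, A⁻¹ (Sum.inl i) j * (A *ᵥ y) j| := by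
        rw [← hu, hui]; rfl
    _ ≤ ∑ j, |A⁻¹ (Sum.inl i) j * (A *ᵥ y) j| := Finset.abs_sum_le_sum_abs _ _
    _ ≤ ∑ j, |A⁻¹ (Sum.inl i) j| * (lmax + lmax ^ 2 / lmin) := by
        refine Finset.sum_le_sum fun j _ => ?_
        rw [abs_mul]
        exact mul_le_mul_of_nonneg_left (hw j) (abs_nonneg _)
    _ = (∑ j, |A⁻¹ (Sum.inl i) j|) * (lmax + lmax ^ 2 / lmin) := by
        rw [← Finset.sum_mul]
    _ ≤ cinf * (lmax + lmax ^ 2 / lmin) :=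
        mul_le_mul_of_nonneg_right (hinf _) hC
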